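/- Let G be a group with presentation ⟨X | R⟩ in which every generator is an involution and every relator has even length. Then for every subset I ⊆ X and every element w ∈ G, there exist a ∈ G^I and b ∈ G_I such that w = ab and l(w) = l(a) + l(b). -/

import Mathlib

/-- The length of an element of a presented group whose generators are involutions:
the least `r` such that `w` is a product of `r` images of generators. -/
noncomputable def genLength {α : Type*} (R : Set (FreeGroup α)) (w : PresentedGroup R) : ℕ :=
  sInf {r : ℕ | ∃ L : List α, L.length = r ∧
    (L.map (PresentedGroup.of : α → PresentedGroup R)).prod = w}

namespace GenLengthAux

variable {α : Type*} [DecidableEq α] (R : Set (FreeGroup α))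

lemma exists_list (hinv : ∀ x : α, (PresentedGroup.of x : PresentedGroup R) ^ 2 = 1)
    (w : PresentedGroup R) :
    ∃ L : List α, (L.map (PresentedGroup.of : α → PresentedGroup R)).prod = w := by
  obtain ⟨v, rfl⟩ := PresentedGroup.mk_surjective R w
  induction v with
  | C1 => exact ⟨[], by simp⟩
  | of x => exact ⟨[x], by simp; rfl⟩
  | inv_of x _ =>
    refine ⟨[x], ?_⟩
    have h1 : (PresentedGroup.of x : PresentedGroup R) * PresentedGroup.of x = 1 := by
      have := hinv x; rwa [sq] at this
    have h2 : ((PresentedGroup.of x : PresentedGroup R))⁻¹ = PresentedGroup.of x :=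
      inv_eq_of_mul_eq_one_right h1
    calc (List.map (PresentedGroup.of : α → PresentedGroup R) [x]).prod
        = (PresentedGroup.of x : PresentedGroup R) := by simp
      _ = (PresentedGroup.of x : PresentedGroup R)⁻¹ := h2.symm
      _ = (PresentedGroup.mk R) (pure x)⁻¹ := (map_inv _ _).symm
  | mul u v hu hv =>
    obtain ⟨Lu, hLu⟩ := hu
    obtain ⟨Lv, hLv⟩ := hv
    exact ⟨Lu ++ Lv, by rw [List.map_append, List.prod_append, hLu, hLv, map_mul]⟩

lemma genLength_le (w : PresentedGroup R) (L : List α)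
    (h : (L.map (PresentedGroup.of : α → PresentedGroup R)).prod = w) :
    genLength R w ≤ L.length :=
  Nat.sInf_le ⟨L, rfl, h⟩

lemma exists_min (hinv : ∀ x : α, (PresentedGroup.of x : PresentedGroup R) ^ 2 = 1)
    (w : PresentedGroup R) :
    ∃ L : List α, L.length = genLength R w ∧
      (L.map (PresentedGroup.of : α → PresentedGroup R)).prod = w := by
  obtain ⟨L, hL⟩ := exists_list R hinv w
  have hne : {r : ℕ | ∃ L : List α, L.length = r ∧
      (L.map (PresentedGroup.of : α → PresentedGroup R)).prod = w}.Nonempty :=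
    ⟨L.length, L, rfl, hL⟩
  exact Nat.sInf_mem hne

lemma genLength_one : genLength R (1 : PresentedGroup R) = 0 :=
  Nat.le_antisymm (genLength_le R 1 [] (by simp)) (Nat.zero_le _)

lemma genLength_mul_le (u v : PresentedGroup R)
    (hinv : ∀ x : α, (PresentedGroup.of x : PresentedGroup R) ^ 2 = 1) :
    genLength R (u * v) ≤ genLength R u + genLength R v := by
  obtain ⟨Lu, hLu, hLu'⟩ := exists_min R hinv u
  obtain ⟨Lv, hLv, hLv'⟩ := exists_min R hinv v
  calc genLength R (u * v) ≤ (Lu ++ Lv).length :=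
        genLength_le R _ _ (by rw [List.map_append, List.prod_append, hLu', hLv'])
    _ = genLength R u + genLength R v := by simp [hLu, hLv]

/-- The parity homomorphism. -/
noncomputable def parity (heven : ∀ r ∈ R, Even (FreeGroup.toWord r).length) :
    PresentedGroup R →* Multiplicative (ZMod 2) :=
  PresentedGroup.toGroup (f := fun _ => Multiplicative.ofAdd (1 : ZMod 2)) (by
    intro r hr
    rw [← FreeGroup.mk_toWord (x := r), FreeGroup.lift_mk]
    rw [List.prod_eq_pow_card _ (Multiplicative.ofAdd (1 : ZMod 2)) (by
      intro g hg
      obtain ⟨p, _, rfl⟩ := List.mem_map.1 hg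
      cases p.2 <;> decide)]
    rw [List.length_map]
    obtain ⟨k, hk⟩ := heven r hr
    have h2 : (Multiplicative.ofAdd (1 : ZMod 2)) ^ 2 = 1 := by decide
    rw [hk, ← two_mul, pow_mul, h2, one_pow])

lemma parity_of (heven : ∀ r ∈ R, Even (FreeGroup.toWord r).length) (x : α) :
    parity R heven (PresentedGroup.of x) = Multiplicative.ofAdd (1 : ZMod 2) :=
  PresentedGroup.toGroup.of _

lemma parity_eq (heven : ∀ r ∈ R, Even (FreeGroup.toWord r).length)
    (hinv : ∀ x : α, (PresentedGroup.of x : PresentedGroup R) ^ 2 = 1)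
    (w : PresentedGroup R) :
    parity R heven w = Multiplicative.ofAdd (1 : ZMod 2) ^ genLength R w := by
  obtain ⟨L, hL, hL'⟩ := exists_min R hinv w
  have key : parity R heven w = Multiplicative.ofAdd (1 : ZMod 2) ^ L.length := by
    rw [← hL', map_list_prod, List.map_map]
    rw [List.prod_eq_pow_card _ (Multiplicative.ofAdd (1 : ZMod 2)) (by
      intro g hg
      obtain ⟨p, _, rfl⟩ := List.mem_map.1 hg
      exact parity_of R heven p)]
    rw [List.length_map]
  rw [key, hL]

lemma length_ne (heven : ∀ r ∈ R, Even (FreeGroup.toWord r).length)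
    (hinv : ∀ x : α, (PresentedGroup.of x : PresentedGroup R) ^ 2 = 1)
    (a : PresentedGroup R) (x : α) :
    genLength R a ≠ genLength R (a * PresentedGroup.of x) := by
  intro h
  have h1 := parity_eq R heven hinv a
  have h2 := parity_eq R heven hinv (a * PresentedGroup.of x)
  rw [map_mul, parity_of, h1, ← h] at h2
  have h3 : (Multiplicative.ofAdd (1 : ZMod 2)) = 1 := (left_eq_mul.mp h2.symm)
  exact absurd h3 (by decide)

end GenLengthAux

theorem stmt_0 {α : Type*} [DecidableEq α] (R : Set (FreeGroup α))
    (hinv : ∀ x : α, (PresentedGroup.of x : PresentedGroup R) ^ 2 = 1)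
    (heven : ∀ r ∈ R, Even (FreeGroup.toWord r).length)
    (I : Set α) (w : PresentedGroup R) :
    ∃ a b : PresentedGroup R,
      (∀ x ∈ I, genLength R a < genLength R (a * PresentedGroup.of x)) ∧
      b ∈ Subgroup.closure ((fun x : α => (PresentedGroup.of x : PresentedGroup R)) '' I) ∧
      w = a * b ∧ genLength R w = genLength R a + genLength R b := by
  classical
  set K : Subgroup (PresentedGroup R) :=
    Subgroup.closure ((fun x : α => (PresentedGroup.of x : PresentedGroup R)) '' I) with hK
  set S : Set ℕ := {k | ∃ a b : PresentedGroup R, genLength R a = k ∧ b ∈ K ∧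
    w = a * b ∧ genLength R w = genLength R a + genLength R b} with hS
  have hSne : S.Nonempty := ⟨genLength R w, w, 1, rfl, one_mem K,
    (mul_one w).symm, by simp [GenLengthAux.genLength_one]⟩
  obtain ⟨a, b, hak, hbK, hw, hlen⟩ := Nat.sInf_mem hSne
  refine ⟨a, b, ?_, hbK, hw, hlen⟩
  intro x hx
  by_contra hcon
  push_neg at hcon
  have hne := GenLengthAux.length_ne R heven hinv a x
  have hlt : genLength R (a * PresentedGroup.of x) < genLength R a :=
    lt_of_le_of_ne hcon (Ne.symm hne)
  have hxx : (PresentedGroup.of x : PresentedGroup R) * PresentedGroup.of x = 1 := by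
    have := hinv x; rwa [sq] at this
  have ha_eq : a = (a * PresentedGroup.of x) * PresentedGroup.of x := by
    rw [mul_assoc, hxx, mul_one]
  have hofx_le : genLength R (PresentedGroup.of x : PresentedGroup R) ≤ 1 :=
    GenLengthAux.genLength_le R _ [x] (by simp)
  have ha_le : genLength R a ≤ genLength R (a * PresentedGroup.of x) + 1 := by
    calc genLength R a = genLength R ((a * PresentedGroup.of x) * PresentedGroup.of x) := by
          rw [← ha_eq]
      _ ≤ genLength R (a * PresentedGroup.of x) + genLength R (PresentedGroup.of x) :=
          GenLengthAux.genLength_mul_le R _ _ hinv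
      _ ≤ genLength R (a * PresentedGroup.of x) + 1 := by omega
  set a' := a * PresentedGroup.of x with ha'
  set b' := PresentedGroup.of x * b with hb'
  have hw' : w = a' * b' := by
    rw [hw, ha', hb', mul_assoc, ← mul_assoc (PresentedGroup.of x), hxx, one_mul]
  have hb'K : b' ∈ K := K.mul_mem (Subgroup.subset_closure ⟨x, hx, rfl⟩) hbK
  have hb'_le : genLength R b' ≤ 1 + genLength R b := by
    calc genLength R b' ≤ genLength R (PresentedGroup.of x) + genLength R b :=
          GenLengthAux.genLength_mul_le R _ _ hinv
      _ ≤ 1 + genLength R b := by omega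
  have hup : genLength R a' + genLength R b' ≤ genLength R w := by omega
  have hdown : genLength R w ≤ genLength R a' + genLength R b' := by
    rw [hw']; exact GenLengthAux.genLength_mul_le R _ _ hinv
  have hS' : genLength R a' ∈ S := ⟨a', b', rfl, hb'K, hw', by omega⟩
  have := Nat.sInf_le hS'
  omega
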